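/- Let (τ_i) be the Thue–Morse sequence and N ≥ 0. Define (γ_i)_{i≥1} by γ_{3k+1} = τ_{2k+1}+N, γ_{3k+2} = N+1, γ_{3k+3} = τ_{2k+2}+N. Let φ₂ be the substitution 0 ↦ N(N+1)(N+1), 1 ↦ (N+1)N(N+1). Then (γ_i)_{i≥1} is the shift by one letter of the concatenation φ₂(τ₀)φ₂(τ₁)φ₂(τ₂)⋯; equivalently, setting γ₀ = N, one has γ_{3k} = τ_k+N, γ_{3k+1} = 1−τ_k+N, γ_{3k+2} = N+1 for all k ≥ 0. -/
import Mathlib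


/-- (γ_i)_{i≥1} is the shift by one of φ₂(τ₀)φ₂(τ₁)⋯; equivalently,
with γ₀ = N one has γ_{3k} = τ_k+N, γ_{3k+1} = 1−τ_k+N, γ_{3k+2} = N+1. -/
theorem gamma_eq_shift_substitution (N : ℕ) (τ : ℕ → ℕ)
    (hτ0 : τ 0 = 0) (hτe : ∀ i, τ (2 * i) = τ i) (hτo : ∀ i, τ (2 * i + 1) = 1 - τ i)
    (γ : ℕ → ℕ) (hγ0 : γ 0 = N)
    (h1 : ∀ k, γ (3 * k + 1) = τ (2 * k + 1) + N)
    (h2 : ∀ k, γ (3 * k + 2) = N + 1)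
    (h3 : ∀ k, γ (3 * k + 3) = τ (2 * k + 2) + N)
    (φ2 : ℕ → List ℕ)
    (hφ0 : φ2 0 = [N, N + 1, N + 1]) (hφ1 : φ2 1 = [N + 1, N, N + 1])
    (c : ℕ → ℕ)
    (hc : ∀ k, [c (3 * k), c (3 * k + 1), c (3 * k + 2)] = φ2 (τ k)) :
    (∀ i, 1 ≤ i → γ i = c i) ∧
      (∀ k, γ (3 * k) = τ k + N ∧ γ (3 * k + 1) = 1 - τ k + N ∧
        γ (3 * k + 2) = N + 1) := by
  -- τ takes values in {0,1}
  have hτle : ∀ k, τ k ≤ 1 := by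
    intro k
    induction k using Nat.strong_induction_on with
    | _ k ih =>
      match k with
      | 0 => simp [hτ0]
      | 1 => have := hτo 0; simp [hτ0] at this; omega
      | (k + 2) =>
        rcases Nat.even_or_odd (k + 2) with ⟨m, hm⟩ | ⟨m, hm⟩
        · have h := hτe m
          rw [show 2 * m = k + 2 by omega] at h
          rw [h]; exact ih m (by omega)
        · have h := hτo m
          rw [show 2 * m + 1 = k + 2 by omega] at h
          rw [h]; omega
  -- γ values
  have γ3 : ∀ k, γ (3 * k) = τ k + N := by
    intro k
    match k with
    | 0 => simpa [hτ0] using hγ0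
    | (k + 1) =>
      have h := h3 k
      rw [show 3 * k + 3 = 3 * (k + 1) by ring, show 2 * k + 2 = 2 * (k + 1) by ring,
        hτe] at h
      exact h
  have γ1 : ∀ k, γ (3 * k + 1) = 1 - τ k + N := by
    intro k; rw [h1 k, hτo]
  -- c values
  have cfacts : ∀ k, c (3 * k) = τ k + N ∧ c (3 * k + 1) = 1 - τ k + N ∧
      c (3 * k + 2) = N + 1 := by
    intro k
    have h := hc k
    rcases Nat.le_one_iff_eq_zero_or_eq_one.mp (hτle k) with h' | h' <;> rw [h'] at h ⊢
    · rw [hφ0] at h; simp at h; omega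
    · rw [hφ1] at h; simp at h; omega
  refine ⟨?_, fun k => ⟨γ3 k, γ1 k, h2 k⟩⟩
  intro i _
  obtain ⟨k, r, hr, rfl⟩ : ∃ k r, r < 3 ∧ i = 3 * k + r :=
    ⟨i / 3, i % 3, Nat.mod_lt _ (by norm_num), by omega⟩
  interval_cases r
  · simpa using (γ3 k).trans (cfacts k).1.symm
  · exact (γ1 k).trans (cfacts k).2.1.symm
  · exact (h2 k).trans (cfacts k).2.2.symm
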